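/- arXiv:1701.00637 — 2 statements merged into one kernel-verified Lean document; each statement's English description precedes it below -/
import Mathlib

section
/- (Cofinal property of iterated Takahashi translation, Church-Rosser for reduction) If P ↞^l M and M ↠^r Q (i.e., M reduces to P in l steps and to Q in r steps) with 1 ≤ l ≤ r, then P ↠ M^(r*) and Q ↠ M^(r*); in particular M^(r*) is a common reduct of P and Q. -/
inductive Lam : Type
  | var : ℕ → Lam
  | lam : Lam → Lam
  | app : Lam → Lam → Lam
  deriving DecidableEq

namespace Lam

/-- term size -/
def size : Lam → ℕ
  | var _ => 1
  | lam M => 1 + M.size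
  | app M N => 1 + M.size + N.size

/-- lift (shift) free variables ≥ d by 1 -/
def lift (d : ℕ) : Lam → Lam
  | var n => if n < d then var n else var (n+1)
  | lam M => lam (M.lift (d+1))
  | app M N => app (M.lift d) (N.lift d)

/-- capture-avoiding substitution of N for the free variable x (de Bruijn) -/
def subst : Lam → ℕ → Lam → Lam
  | var n, x, N => if n = x then N else if x < n then var (n-1) else var n
  | lam M, x, N => lam (M.subst (x+1) (N.lift 0))
  | app M P, x, N => app (M.subst x N) (P.subst x N)

/-- number of free occurrences of the variable x -/
def count : Lam → ℕ → ℕ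
  | var n, x => if n = x then 1 else 0
  | lam M, x => M.count (x+1)
  | app M N, x => M.count x + N.count x

/-- one-step β-reduction -/
inductive Step : Lam → Lam → Prop
  | beta (M N : Lam) : Step (app (lam M) N) (M.subst 0 N)
  | appL {M M' : Lam} (N : Lam) : Step M M' → Step (app M N) (app M' N)
  | appR (M : Lam) {N N' : Lam} : Step N N' → Step (app M N) (app M N')
  | abs {M M' : Lam} : Step M M' → Step (lam M) (lam M')

/-- many-step β-reduction (reflexive-transitive closure) -/
def Red : Lam → Lam → Prop := Relation.ReflTransGen Step

/-- n-step β-reduction -/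
def Steps : ℕ → Lam → Lam → Prop
  | 0, M, N => M = N
  | n+1, M, N => ∃ P, Step M P ∧ Steps n P N

/-- Takahashi translation (Gross-Knuth complete development) -/
def star : Lam → Lam
  | var n => var n
  | lam M => lam (star M)
  | app (lam M) N => (star M).subst 0 (star N)
  | app (var n) N => app (var n) (star N)
  | app (app M₁ M₂) N => app (star (app M₁ M₂)) (star N)

/-- iterated Takahashi translation M^(n*) -/
def iterStar (n : ℕ) (M : Lam) : Lam := star^[n] M

end Lam

namespace Lam

/-! ### de Bruijn lemmas -/

theorem lift_lift (M : Lam) : ∀ d d', d ≤ d' →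
    (M.lift d).lift (d'+1) = (M.lift d').lift d := by
  induction M with
  | var n =>
      intro d d' h
      simp only [lift]
      split_ifs <;> simp only [lift] <;> split_ifs <;> first | rfl | omega
  | lam M ih =>
      intro d d' h
      simp only [lift]
      rw [ih _ _ (by omega)]
  | app A B ihA ihB =>
      intro d d' h
      simp only [lift, ihA _ _ h, ihB _ _ h]

theorem lift_subst_low (M : Lam) : ∀ x d (N : Lam), x ≤ d →
    (M.subst x N).lift d = (M.lift (d+1)).subst x (N.lift d) := by
  induction M with
  | var n =>
      intro x d N h
      simp only [subst, lift]
      split_ifs <;> simp only [subst, lift] <;> split_ifs <;>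
        first | rfl | omega | (congr 1; omega)
  | lam M ih =>
      intro x d N h
      simp only [subst, lift]
      rw [ih _ _ _ (by omega), lift_lift N 0 d (by omega)]
  | app A B ihA ihB =>
      intro x d N h
      simp only [subst, lift, ihA _ _ _ h, ihB _ _ _ h]

theorem lift_subst_high (M : Lam) : ∀ x d (N : Lam), d ≤ x →
    (M.subst x N).lift d = (M.lift d).subst (x+1) (N.lift d) := by
  induction M with
  | var n =>
      intro x d N h
      simp only [subst, lift]
      split_ifs <;> simp only [subst, lift] <;> split_ifs <;>
        first | rfl | omega | (congr 1; omega)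
  | lam M ih =>
      intro x d N h
      simp only [subst, lift]
      rw [ih _ _ _ (by omega), lift_lift N 0 d (by omega)]
  | app A B ihA ihB =>
      intro x d N h
      simp only [subst, lift, ihA _ _ _ h, ihB _ _ _ h]

theorem subst_lift_cancel (M : Lam) : ∀ d (N : Lam), (M.lift d).subst d N = M := by
  induction M with
  | var n =>
      intro d N
      simp only [lift]
      split_ifs <;> simp only [subst] <;> split_ifs <;>
        first | rfl | omega | (congr 1; omega)
  | lam M ih =>
      intro d N
      simp only [lift, subst, ih]
  | app A B ihA ihB =>
      intro d N
      simp only [lift, subst, ihA, ihB]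

theorem subst_subst (M : Lam) : ∀ x y (N P : Lam), y ≤ x →
    (M.subst y N).subst x P = (M.subst (x+1) (P.lift y)).subst y (N.subst x P) := by
  induction M with
  | var n =>
      intro x y N P h
      simp only [subst]
      split_ifs <;>
        first
          | rfl | omega
          | (simp only [subst]; split_ifs <;>
              first | rfl | omega | (congr 1; omega) | (rw [subst_lift_cancel]))
  | lam M ih =>
      intro x y N P h
      simp only [subst]
      rw [ih _ _ _ _ (by omega), lift_lift P 0 y (by omega),
        lift_subst_high N x 0 P (by omega)]
  | app A B ihA ihB =>
      intro x y N P h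
      simp only [subst, ihA _ _ _ _ h, ihB _ _ _ _ h]

/-! ### Parallel reduction -/

inductive Par : Lam → Lam → Prop
  | var (n : ℕ) : Par (var n) (var n)
  | lam {M M' : Lam} : Par M M' → Par (lam M) (lam M')
  | app {M M' N N' : Lam} : Par M M' → Par N N' → Par (app M N) (app M' N')
  | beta {M M' N N' : Lam} : Par M M' → Par N N' →
      Par (app (lam M) N) (M'.subst 0 N')

theorem par_refl (M : Lam) : Par M M := by
  induction M with
  | var n => exact Par.var n
  | lam M ih => exact Par.lam ih
  | app A B ihA ihB => exact Par.app ihA ihB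

theorem step_par {M N : Lam} (h : Step M N) : Par M N := by
  induction h with
  | beta M N => exact Par.beta (par_refl M) (par_refl N)
  | appL N _ ih => exact Par.app ih (par_refl N)
  | appR M _ ih => exact Par.app (par_refl M) ih
  | abs _ ih => exact Par.lam ih

theorem red_lam {M M' : Lam} (h : Red M M') : Red (lam M) (lam M') :=
  Relation.ReflTransGen.lift lam (fun _ _ => Step.abs) _ _ h

theorem red_appL {M M' : Lam} (N : Lam) (h : Red M M') :
    Red (app M N) (app M' N) :=
  Relation.ReflTransGen.lift (fun X => app X N) (fun _ _ => Step.appL N) _ _ h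

theorem red_appR (M : Lam) {N N' : Lam} (h : Red N N') :
    Red (app M N) (app M N') :=
  Relation.ReflTransGen.lift (fun X => app M X) (fun _ _ => Step.appR M) _ _ h

theorem par_red {M N : Lam} (h : Par M N) : Red M N := by
  induction h with
  | var n => exact Relation.ReflTransGen.refl
  | lam _ ih => exact red_lam ih
  | app _ _ ihM ihN => exact Relation.ReflTransGen.trans (red_appL _ ihM) (red_appR _ ihN)
  | @beta M M' N N' _ _ ihM ihN =>
      exact Relation.ReflTransGen.trans
        (Relation.ReflTransGen.trans (red_appL _ (red_lam ihM)) (red_appR _ ihN))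
        (Relation.ReflTransGen.single (Step.beta M' N'))

theorem par_lift {M N : Lam} (h : Par M N) : ∀ d, Par (M.lift d) (N.lift d) := by
  induction h with
  | var n => intro d; simp only [lift]; split_ifs <;> exact par_refl _
  | lam _ ih => intro d; exact Par.lam (ih (d+1))
  | app _ _ ihM ihN => intro d; exact Par.app (ihM d) (ihN d)
  | @beta M M' N N' _ _ ihM ihN =>
      intro d
      simp only [lift]
      rw [lift_subst_low M' 0 d N' (by omega)]
      exact Par.beta (ihM (d+1)) (ihN d)

theorem par_subst {M M' : Lam} (hM : Par M M') : ∀ {N N' : Lam}, Par N N' →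
    ∀ x, Par (M.subst x N) (M'.subst x N') := by
  induction hM with
  | var n =>
      intro N N' hN x
      simp only [subst]
      split_ifs <;> first | exact hN | exact par_refl _
  | lam _ ih =>
      intro N N' hN x
      exact Par.lam (ih (par_lift hN 0) (x+1))
  | app _ _ ihM ihN =>
      intro N N' hN x
      exact Par.app (ihM hN x) (ihN hN x)
  | @beta A A' B B' _ _ ihA ihB =>
      intro N N' hN x
      simp only [subst]
      rw [subst_subst A' x 0 B' N' (by omega)]
      exact Par.beta (ihA (par_lift hN 0) (x+1)) (ihB hN x)

theorem par_lam_inv {M N : Lam} (h : Par (lam M) N) :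
    ∃ M', N = lam M' ∧ Par M M' := by
  cases h with
  | lam h => exact ⟨_, rfl, h⟩

theorem par_var_inv {n : ℕ} {N : Lam} (h : Par (var n) N) : N = var n := by
  cases h; rfl

/-- Triangle property of the Takahashi translation. -/
theorem par_triangle {M N : Lam} (h : Par M N) : Par N (star M) := by
  induction h with
  | var n => exact Par.var n
  | lam _ ih => exact Par.lam ih
  | @app M M' N N' hM _ ihM ihN =>
      cases M with
      | var n =>
          rw [par_var_inv hM]
          exact Par.app (Par.var n) ihN
      | lam A =>
          obtain ⟨A', rfl, _⟩ := par_lam_inv hM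
          have hstar : star (lam A) = lam (star A) := rfl
          rw [hstar] at ihM
          cases ihM with
          | lam h' =>
            show Par (app (lam A') N') ((star A).subst 0 (star N))
            exact Par.beta h' ihN
      | app B C =>
          exact Par.app ihM ihN
  | beta _ _ ihM ihN =>
      exact par_subst ihM ihN 0

theorem par_star (M : Lam) : Par M (star M) := par_triangle (par_refl M)

theorem par_star_mono {M N : Lam} (h : Par M N) : Par (star M) (star N) :=
  par_triangle (par_triangle h)

theorem par_iterStar {M N : Lam} (h : Par M N) (n : ℕ) :
    Par (iterStar n M) (iterStar n N) := by
  induction n with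
  | zero => exact h
  | succ n ih =>
      simpa only [iterStar, Function.iterate_succ_apply'] using par_star_mono ih

theorem steps_red_iterStar {n : ℕ} : ∀ {M P : Lam}, Steps n M P →
    Red P (iterStar n M) := by
  induction n with
  | zero => intro M P h; exact h ▸ Relation.ReflTransGen.refl
  | succ n ih =>
      intro M P h
      obtain ⟨P₁, hstep, hsteps⟩ := h
      have h1 : Red P (iterStar n P₁) := ih hsteps
      have h2 : Par P₁ (star M) := par_triangle (step_par hstep)
      have h3 : Red (iterStar n P₁) (iterStar n (star M)) :=
        par_red (par_iterStar h2 n)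
      have : iterStar n (star M) = iterStar (n+1) M := by
        simp [iterStar, Function.iterate_succ_apply]
      exact this ▸ Relation.ReflTransGen.trans h1 h3

theorem iterStar_red {M : Lam} {k r : ℕ} (h : k ≤ r) :
    Red (iterStar k M) (iterStar r M) := by
  induction h with
  | refl => exact Relation.ReflTransGen.refl
  | step _ ih =>
      refine Relation.ReflTransGen.trans ih ?_
      rename_i m _
      have : iterStar (m+1) M = star (iterStar m M) := by
        simp [iterStar, Function.iterate_succ_apply']
      exact this ▸ par_red (par_star _)

end Lam

/-- Church-Rosser for β-reduction via iterated translation -/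
theorem cofinal_CR {M P Q : Lam} {l r : ℕ} (hl : 1 ≤ l) (hlr : l ≤ r)
    (hP : Lam.Steps l M P) (hQ : Lam.Steps r M Q) :
    Lam.Red P (Lam.iterStar r M) ∧ Lam.Red Q (Lam.iterStar r M) := by
  refine ⟨Relation.ReflTransGen.trans (Lam.steps_red_iterStar hP) (Lam.iterStar_red hlr),
    Lam.steps_red_iterStar hQ⟩
end

section
/- If M ↠ M* ↠ M^(2*) ↠ ⋯ ↠ M^(n*) with each stage a complete development of at most (1/2)|·|−1 steps, then the total reduction length l from M to M^(n*) is bounded by (1/2)·Σ_{k=0}^{n−1} F(|M|,k) − n, where F(m,0)=m and F(m,k+1)=2^(F(m,k)−1); in particular l < 2_{n−1}^{|M|} (the (n−1)-fold iterated exponential of |M|) for n ≥ 1. -/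
namespace Lam

/-- F(m,0) = m, F(m,k+1) = 2^(F(m,k)−1) -/
def F (m : ℕ) : ℕ → ℕ
  | 0 => m
  | k+1 => 2 ^ (F m k - 1)

/-- iterated exponentials: 2_0^m = m, 2_{n+1}^m = 2^(2_n^m) -/
def twoIter : ℕ → ℕ → ℕ
  | 0, m => m
  | n+1, m => 2 ^ twoIter n m

end Lam


namespace Lam

theorem size_pos' (M : Lam) : 1 ≤ M.size := by
  cases M <;> simp [size] <;> omega

theorem size_lift' (M : Lam) : ∀ d, (M.lift d).size = M.size := by
  induction M with
  | var n => intro d; simp only [lift]; split <;> simp [size]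
  | lam M ih => intro d; simp [lift, size, ih]
  | app M N ih1 ih2 => intro d; simp [lift, size, ih1, ih2]

theorem size_subst' (M : Lam) : ∀ x N, (M.subst x N).size ≤ M.size * N.size := by
  induction M with
  | var n =>
      intro x N
      have hN := size_pos' N
      simp only [subst, size]
      split_ifs <;> simp [size] <;> omega
  | lam M ih =>
      intro x N
      have hN := size_pos' N
      have h := ih (x+1) (N.lift 0)
      rw [size_lift'] at h
      simp only [subst, size]
      nlinarith [size_pos' M]
  | app M P ih1 ih2 =>
      intro x N
      have hN := size_pos' N
      have h1 := ih1 x N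
      have h2 := ih2 x N
      simp only [subst, size]
      nlinarith

theorem two_mul_size_star (M : Lam) : 2 * (star M).size ≤ 2 ^ M.size := by
  induction M with
  | var n => simp [star, size]
  | lam M ih =>
      have h1 : 1 ≤ M.size := size_pos' M
      have h2 : (2:ℕ) ≤ 2 ^ M.size := by
        calc (2:ℕ) = 2 ^ 1 := rfl
          _ ≤ 2 ^ M.size := Nat.pow_le_pow_right (by norm_num) h1
      show 2 * (1 + (star M).size) ≤ 2 ^ (1 + M.size)
      rw [pow_add]
      omega
  | app P N ih1 ih2 =>
      have hq : 1 ≤ N.size := size_pos' N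
      have hy : (2:ℕ) ≤ 2 ^ N.size := by
        calc (2:ℕ) = 2 ^ 1 := rfl
          _ ≤ 2 ^ N.size := Nat.pow_le_pow_right (by norm_num) hq
      cases P with
      | var n =>
          show 2 * (1 + 1 + (star N).size) ≤ 2 ^ (1 + 1 + N.size)
          rw [pow_add, pow_add]
          omega
      | lam Q =>
          have hA : (star Q).size + 1 ≤ 2 ^ Q.size := by
            have : 2 * (1 + (star Q).size) ≤ 2 ^ (1 + Q.size) := ih1
            rw [pow_add] at this; omega
          have hs : ((star Q).subst 0 (star N)).size ≤ (star Q).size * (star N).size :=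
            size_subst' _ 0 _
          show 2 * ((star Q).subst 0 (star N)).size ≤ 2 ^ (1 + (1 + Q.size) + N.size)
          have key : (star Q).size * (2 * (star N).size) ≤ 2 ^ Q.size * 2 ^ N.size :=
            Nat.mul_le_mul (by omega) ih2
          calc 2 * ((star Q).subst 0 (star N)).size
              ≤ 2 * ((star Q).size * (star N).size) := by omega
            _ = (star Q).size * (2 * (star N).size) := by ring
            _ ≤ 2 ^ Q.size * 2 ^ N.size := key
            _ ≤ 2 ^ (1 + (1 + Q.size) + N.size) := by
                rw [pow_add, pow_add, pow_add]
                nlinarith [Nat.one_le_two_pow (n := Q.size), Nat.one_le_two_pow (n := N.size)]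
      | app A B =>
          have ha : 3 ≤ (app A B).size := by
            have := size_pos' A; have := size_pos' B; simp [size]; omega
          have hx : (8:ℕ) ≤ 2 ^ (app A B).size := by
            calc (8:ℕ) = 2 ^ 3 := rfl
              _ ≤ 2 ^ (app A B).size := Nat.pow_le_pow_right (by norm_num) ha
          show 2 * (1 + (star (app A B)).size + (star N).size)
              ≤ 2 ^ (1 + (app A B).size + N.size)
          have h1 : 8 * 2 ^ N.size ≤ 2 ^ (app A B).size * 2 ^ N.size :=
            Nat.mul_le_mul_right _ hx
          have h2 : 2 ^ (app A B).size * 2 ≤ 2 ^ (app A B).size * 2 ^ N.size :=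
            Nat.mul_le_mul_left _ hy
          have hgoal : (2:ℕ) ^ (1 + (app A B).size + N.size)
              = 2 * (2 ^ (app A B).size * 2 ^ N.size) := by
            rw [pow_add, pow_add]; ring
          rw [hgoal]
          omega

theorem size_iterStar_le (M : Lam) (k : ℕ) : (iterStar k M).size ≤ F M.size k := by
  induction k with
  | zero => simp [iterStar, F]
  | succ k ih =>
      have hF : 1 ≤ F M.size k := by
        cases k with
        | zero => simpa [F] using size_pos' M
        | succ j => simp only [F]; exact Nat.one_le_two_pow
      have hstep : iterStar (k+1) M = star (iterStar k M) := by
        simp [iterStar, Function.iterate_succ_apply']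
      rw [hstep]
      have h1 : 2 * (star (iterStar k M)).size ≤ 2 ^ (iterStar k M).size :=
        two_mul_size_star _
      have h2 : (2:ℕ) ^ (iterStar k M).size ≤ 2 ^ F M.size k :=
        Nat.pow_le_pow_right (by norm_num) ih
      have h3 : (2:ℕ) ^ F M.size k = 2 * 2 ^ (F M.size k - 1) := by
        conv_lhs => rw [show F M.size k = 1 + (F M.size k - 1) by omega]
        rw [pow_add, pow_one]
      show (star (iterStar k M)).size ≤ 2 ^ (F M.size k - 1)
      omega

theorem F_le_twoIter (m k : ℕ) : F m k ≤ twoIter k m := by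
  induction k with
  | zero => simp [F, twoIter]
  | succ k ih =>
      simp only [F, twoIter]
      exact Nat.pow_le_pow_right (by norm_num) (by omega)

theorem two_mul_le_two_pow_add_two (x : ℕ) : 2 * x ≤ 2 ^ x + 2 := by
  cases x with
  | zero => simp
  | succ n =>
      have h : n < 2 ^ n := Nat.lt_two_pow_self
      rw [pow_succ]
      omega
  
theorem sum_F_le (m j : ℕ) :
    ∑ k ∈ Finset.range (j+1), F m k ≤ 2 * twoIter j m + 2 * j := by
  induction j with
  | zero => simp [F, twoIter]; omega
  | succ j ih =>
      rw [Finset.sum_range_succ]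
      have h1 : F m (j+1) ≤ twoIter (j+1) m := F_le_twoIter m (j+1)
      have h2 : 2 * twoIter j m ≤ 2 ^ twoIter j m + 2 :=
        two_mul_le_two_pow_add_two _
      have h3 : twoIter (j+1) m = 2 ^ twoIter j m := rfl
      omega

end Lam

/-- total reduction length from M to M^(n*) -/
theorem length_to_iterStar (M : Lam) (n : ℕ) (ls : ℕ → ℕ)
    (hsteps : ∀ k < n, Lam.Steps (ls k) (Lam.iterStar k M) (Lam.iterStar (k+1) M))
    (hbound : ∀ k < n, (ls k : ℚ) ≤ ((Lam.iterStar k M).size : ℚ) / 2 - 1) :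
    ((∑ k ∈ Finset.range n, ls k : ℕ) : ℚ) ≤
        (1/2) * (∑ k ∈ Finset.range n, (Lam.F M.size k : ℚ)) - n ∧
      (1 ≤ n → ((∑ k ∈ Finset.range n, ls k : ℕ) : ℚ) < Lam.twoIter (n-1) M.size) := by
  have key : ∀ k < n, (ls k : ℚ) ≤ (Lam.F M.size k : ℚ) / 2 - 1 := by
    intro k hk
    have h1 := hbound k hk
    have h2 : ((Lam.iterStar k M).size : ℚ) ≤ (Lam.F M.size k : ℚ) := by
      exact_mod_cast Lam.size_iterStar_le M k
    linarith
  have part1 : ((∑ k ∈ Finset.range n, ls k : ℕ) : ℚ) ≤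
      (1/2) * (∑ k ∈ Finset.range n, (Lam.F M.size k : ℚ)) - n := by
    push_cast
    calc (∑ k ∈ Finset.range n, (ls k : ℚ))
        ≤ ∑ k ∈ Finset.range n, ((Lam.F M.size k : ℚ) / 2 - 1) :=
          Finset.sum_le_sum (fun k hk => key k (Finset.mem_range.mp hk))
      _ = (1/2) * (∑ k ∈ Finset.range n, (Lam.F M.size k : ℚ)) - n := by
          rw [Finset.sum_sub_distrib, Finset.sum_const, Finset.card_range,
            ← Finset.sum_div]
          ring
  refine ⟨part1, fun hn => ?_⟩
  obtain ⟨j, rfl⟩ : ∃ j, n = j + 1 := ⟨n - 1, by omega⟩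
  have hsum : (∑ k ∈ Finset.range (j+1), (Lam.F M.size k : ℚ))
      ≤ 2 * (Lam.twoIter j M.size : ℚ) + 2 * j := by
    have := Lam.sum_F_le M.size j
    exact_mod_cast this
  have : (j + 1 - 1) = j := by omega
  rw [this]
  have hj : (0:ℚ) ≤ (j:ℚ) := by positivity
  push_cast at part1 ⊢
  linarith
end
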